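/- arXiv:2403.00853 — 3 statements merged into one kernel-verified Lean document; each statement's English description precedes it below -/
import Mathlib

section
/- Let f : ℝ^d → ℝ have L-Lipschitz continuous gradient, let 0 < β ≤ 1, and let x, x⁺, v, v⁻ ∈ ℝ^d with v = v⁻ + β(∇f(x) + η − v⁻) for some η ∈ ℝ^d. Then ‖∇f(x⁺) − v‖² ≤ (1 − β/2)‖∇f(x) − v⁻‖² + (1 + β/2)β‖η‖² + (1 + 2/β)L²‖x⁺ − x‖². -/
theorem stmt_9 (d : ℕ) (L : ℝ) (f : EuclideanSpace ℝ (Fin d) → ℝ)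
    (hLip : ∀ a b, ‖gradient f a - gradient f b‖ ≤ L * ‖a - b‖)
    (β : ℝ) (hβ0 : 0 < β) (hβ1 : β ≤ 1)
    (x xp vm η v : EuclideanSpace ℝ (Fin d))
    (hv : v = vm + β • (gradient f x + η - vm)) :
    ‖gradient f xp - v‖ ^ 2 ≤ (1 - β / 2) * ‖gradient f x - vm‖ ^ 2
      + (1 + β / 2) * β * ‖η‖ ^ 2 + (1 + 2 / β) * L ^ 2 * ‖xp - x‖ ^ 2 := by
  have hdecomp : gradient f x - v = (1 - β) • (gradient f x - vm) - β • η := by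
    rw [hv]; module
  have hsum : gradient f xp - v =
      (gradient f xp - gradient f x) + (gradient f x - v) := by abel
  set G := ‖gradient f xp - v‖ with hG
  set a := ‖gradient f xp - gradient f x‖ with ha
  set b := ‖gradient f x - v‖ with hb
  set p := ‖gradient f x - vm‖ with hp
  set q := ‖η‖ with hq
  set n := ‖xp - x‖ with hn
  have hG0 : 0 ≤ G := norm_nonneg _
  have ha0 : 0 ≤ a := norm_nonneg _
  have hb0 : 0 ≤ b := norm_nonneg _
  have hp0 : 0 ≤ p := norm_nonneg _
  have hq0 : 0 ≤ q := norm_nonneg _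
  have hn0 : 0 ≤ n := norm_nonneg _
  have hL : a ≤ L * n := hLip xp x
  have hbb : b ≤ (1 - β) * p + β * q := by
    calc b = ‖(1 - β) • (gradient f x - vm) - β • η‖ := by rw [hb, hdecomp]
      _ ≤ ‖(1 - β) • (gradient f x - vm)‖ + ‖β • η‖ := norm_sub_le _ _
      _ = (1 - β) * p + β * q := by
          rw [norm_smul, norm_smul, Real.norm_eq_abs, Real.norm_eq_abs,
            abs_of_nonneg (by linarith), abs_of_nonneg (le_of_lt hβ0)]
  have htri : G ≤ a + b := by rw [hG, hsum]; exact norm_add_le _ _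
  clear_value G a b p q n
  clear hdecomp hsum hv hLip hG ha hb hp hq hn f x xp vm η v
  have hLHS : G ^ 2 ≤ (a + b) ^ 2 := by nlinarith
  have key1 : (a + b) ^ 2 ≤ (1 + 2 / β) * a ^ 2 + (1 + β / 2) * b ^ 2 := by
    rw [← mul_le_mul_iff_right₀ hβ0]
    have hexp : β * ((1 + 2 / β) * a ^ 2 + (1 + β / 2) * b ^ 2)
        = β * a ^ 2 + 2 * a ^ 2 + β * b ^ 2 + β ^ 2 / 2 * b ^ 2 := by
      field_simp; ring
    rw [hexp]; nlinarith [sq_nonneg (β * b - 2 * a)]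
  have key2 : b ^ 2 ≤ (1 - β) * p ^ 2 + β * q ^ 2 := by
    nlinarith [mul_nonneg (mul_nonneg hβ0.le (by linarith : (0:ℝ) ≤ 1 - β)) (sq_nonneg (p - q))]
  have key3 : a ^ 2 ≤ L ^ 2 * n ^ 2 := by nlinarith
  have hcoef : (0:ℝ) ≤ 1 + 2 / β := by positivity
  nlinarith [mul_le_mul_of_nonneg_left key3 hcoef,
    mul_le_mul_of_nonneg_left key2 (by linarith : (0:ℝ) ≤ 1 + β / 2),
    mul_nonneg (mul_nonneg hβ0.le hβ0.le) (sq_nonneg p)]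
end

section
/- Let f : ℝ^d → ℝ be differentiable with L-Lipschitz continuous gradient and bounded below by f* = inf f > −∞. Consider one momentum step x⁺ = x − γ v with v = v⁻ + β(∇f(x) + η − v⁻), where γ > 0, 0 < β ≤ 1, η ∈ ℝ^d, and let φ = f(x) − f* + A‖∇f(x) − v⁻‖² and φ⁺ = f(x⁺) − f* + A‖∇f(x⁺) − v‖² for A > 0. If γ ≤ 1/L, then φ⁺ ≤ f(x) − f* − (γ/2)‖∇f(x)‖² + B₁‖∇f(x) − v⁻‖² − B₂‖x⁺ − x‖² + B₃‖η‖², where B₁ = γ(1−β)/2 + A(1 − β/2), B₂ = 1/(2γ) − L/2 − A(β+2)L²/β, and B₃ = γβ/2 + Aβ(1 + β/2). -/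
open RealInnerProductSpace

set_option maxHeartbeats 1000000

private lemma young_aux {E : Type*} [NormedAddCommGroup E] [InnerProductSpace ℝ E]
    (u w : E) (t s : ℝ) (ht : 0 < t) (hs : t * s = 1) :
    ‖u + w‖ ^ 2 ≤ (1 + t) * ‖u‖ ^ 2 + (1 + s) * ‖w‖ ^ 2 := by
  have h := norm_add_sq_real u w
  have h2 := real_inner_le_norm u w
  have hs0 : 0 < s := by nlinarith
  have key : t * ‖u‖ ^ 2 + s * ‖w‖ ^ 2 - 2 * ‖u‖ * ‖w‖ = (t * ‖u‖ - ‖w‖) ^ 2 * s := by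
    linear_combination (2 * ‖u‖ * ‖w‖ - t * ‖u‖ ^ 2) * hs
  nlinarith [mul_nonneg (sq_nonneg (t * ‖u‖ - ‖w‖)) hs0.le]

private lemma conv_aux {E : Type*} [NormedAddCommGroup E] [InnerProductSpace ℝ E]
    (a b : E) (θ μ : ℝ) (hθ : 0 ≤ θ) (hμ : 0 ≤ μ) (hsum : θ + μ = 1) :
    ‖θ • a + μ • b‖ ^ 2 ≤ θ * ‖a‖ ^ 2 + μ * ‖b‖ ^ 2 := by
  have e : θ * ‖a‖ ^ 2 + μ * ‖b‖ ^ 2 - ‖θ • a + μ • b‖ ^ 2 = θ * μ * ‖a - b‖ ^ 2 := by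
    rw [norm_add_sq_real, norm_sub_sq_real, norm_smul, norm_smul,
      real_inner_smul_left, real_inner_smul_right]
    simp only [Real.norm_eq_abs, abs_of_nonneg hθ, abs_of_nonneg hμ]
    linear_combination (-(θ * ‖a‖ ^ 2) - μ * ‖b‖ ^ 2) * hsum
  nlinarith [mul_nonneg (mul_nonneg hθ hμ) (sq_nonneg ‖a - b‖)]

theorem stmt_11 (d : ℕ) (L : ℝ) (f : EuclideanSpace ℝ (Fin d) → ℝ)
    (hdiff : Differentiable ℝ f)
    (hLip : ∀ a b, ‖gradient f a - gradient f b‖ ≤ L * ‖a - b‖)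
    (hdesc : ∀ a b, f b ≤ f a + ⟪gradient f a, b - a⟫ + L / 2 * ‖b - a‖ ^ 2)
    (fstar : ℝ) (hbound : ∀ z, fstar ≤ f z)
    (γ β A : ℝ) (hγ0 : 0 < γ) (hβ0 : 0 < β) (hβ1 : β ≤ 1) (hA : 0 < A)
    (hγL : γ ≤ 1 / L)
    (x vm η v xp : EuclideanSpace ℝ (Fin d))
    (hv : v = vm + β • (gradient f x + η - vm))
    (hxp : xp = x - γ • v)
    (φ φp : ℝ)
    (hφ : φ = f x - fstar + A * ‖gradient f x - vm‖ ^ 2)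
    (hφp : φp = f xp - fstar + A * ‖gradient f xp - v‖ ^ 2) :
    φp ≤ f x - fstar - γ / 2 * ‖gradient f x‖ ^ 2
      + (γ * (1 - β) / 2 + A * (1 - β / 2)) * ‖gradient f x - vm‖ ^ 2
      - (1 / (2 * γ) - L / 2 - A * (β + 2) * L ^ 2 / β) * ‖xp - x‖ ^ 2
      + (γ * β / 2 + A * β * (1 + β / 2)) * ‖η‖ ^ 2 := by
  set g := gradient f x with hg
  set gp := gradient f xp with hgp
  have hβ0' : β ≠ 0 := ne_of_gt hβ0
  have hγ0' : γ ≠ 0 := ne_of_gt hγ0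
  have hxv : xp - x = -(γ • v) := by rw [hxp]; abel
  have hP : ‖xp - x‖ ^ 2 = γ ^ 2 * ‖v‖ ^ 2 := by
    rw [hxv, norm_neg, norm_smul, Real.norm_eq_abs, mul_pow, sq_abs]
  have hinner : ⟪g, xp - x⟫ = -(γ * ⟪g, v⟫) := by
    rw [hxv, inner_neg_right, real_inner_smul_right]
  have hgv : ‖g - v‖ ^ 2 = ‖g‖ ^ 2 - 2 * ⟪g, v⟫ + ‖v‖ ^ 2 := norm_sub_sq_real g v
  have e1 : ⟪g, xp - x⟫ = γ / 2 * ‖g - v‖ ^ 2 - γ / 2 * ‖g‖ ^ 2 - 1 / (2 * γ) * ‖xp - x‖ ^ 2 := by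
    rw [hinner, hgv, hP]
    field_simp
    ring
  have step1 : f xp ≤ f x - γ / 2 * ‖g‖ ^ 2 - 1 / (2 * γ) * ‖xp - x‖ ^ 2
      + γ / 2 * ‖g - v‖ ^ 2 + L / 2 * ‖xp - x‖ ^ 2 := by
    have hd := hdesc x xp
    rw [e1] at hd
    linarith
  have hgmv : g - v = (1 - β) • (g - vm) + β • (-η) := by
    rw [hv]; module
  have step4 : ‖g - v‖ ^ 2 ≤ (1 - β) * ‖g - vm‖ ^ 2 + β * ‖η‖ ^ 2 := by
    have := conv_aux (g - vm) (-η) (1 - β) β (by linarith) hβ0.le (by ring)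
    rw [← hgmv, norm_neg] at this
    exact this
  have hgpv : gp - v = (gp - g) + (g - v) := by abel
  have step2 : ‖gp - v‖ ^ 2 ≤ (1 + 2 / β) * ‖gp - g‖ ^ 2 + (1 + β / 2) * ‖g - v‖ ^ 2 := by
    have := young_aux (gp - g) (g - v) (2 / β) (β / 2) (by positivity) (by field_simp)
    rw [← hgpv] at this
    exact this
  have step3 : ‖gp - g‖ ^ 2 ≤ L ^ 2 * ‖xp - x‖ ^ 2 := by
    have h := hLip xp x
    nlinarith [norm_nonneg (gp - g)]
  have hco : A * (β + 2) * L ^ 2 / β = A * (1 + 2 / β) * L ^ 2 := by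
    field_simp
  rw [hφp, hco]
  have f2 : A * ‖gp - v‖ ^ 2 ≤ A * ((1 + 2 / β) * ‖gp - g‖ ^ 2 + (1 + β / 2) * ‖g - v‖ ^ 2) :=
    mul_le_mul_of_nonneg_left step2 hA.le
  have f3 : A * (1 + 2 / β) * ‖gp - g‖ ^ 2 ≤ A * (1 + 2 / β) * (L ^ 2 * ‖xp - x‖ ^ 2) :=
    mul_le_mul_of_nonneg_left step3 (by positivity)
  have f4 : (γ / 2 + A * (1 + β / 2)) * ‖g - v‖ ^ 2
      ≤ (γ / 2 + A * (1 + β / 2)) * ((1 - β) * ‖g - vm‖ ^ 2 + β * ‖η‖ ^ 2) :=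
    mul_le_mul_of_nonneg_left step4 (by positivity)
  have slack : 0 ≤ A * β ^ 2 / 2 * ‖g - vm‖ ^ 2 := by positivity
  nlinarith [step1, f2, f3, f4, slack]
end

section
/- Let Q : ℝ^d → ℝ^d satisfy ‖Q(x) − x‖² ≤ (1 − α)‖x‖² for all x and some 0 < α ≤ 1, and let g₁, …, g_n, x ∈ ℝ^d with ‖g_i − ∇f_i(x)‖² ≤ σ² and ‖∇f_i(x) − ∇f(x)‖² ≤ δ² for each i, where ∇f(x) = (1/n)∑ ∇f_i(x). Then η = (1/n)∑_{i=1}^n Q(g_i) − ∇f(x) satisfies ‖η‖² ≤ (1 − α/8)‖∇f(x)‖² + (1 − α/4)(1 + 8/α)δ² + [(1 − α/2)(1 + 4/α) + (1 + 2/α)]σ². -/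
open Finset

lemma young_ineq {E : Type*} [NormedAddCommGroup E] (u v : E) (β : ℝ) (hβ : 0 < β) :
    ‖u + v‖ ^ 2 ≤ (1 + β) * ‖u‖ ^ 2 + (1 + 1 / β) * ‖v‖ ^ 2 := by
  have h2 : ‖u + v‖ ^ 2 ≤ (‖u‖ + ‖v‖) ^ 2 :=
    pow_le_pow_left₀ (norm_nonneg _) (norm_add_le u v) 2
  have h5 : 2 * ‖u‖ * ‖v‖ ≤ β * ‖u‖ ^ 2 + (1 / β) * ‖v‖ ^ 2 := by
    rw [← sub_nonneg]
    have : β * ‖u‖ ^ 2 + (1 / β) * ‖v‖ ^ 2 - 2 * ‖u‖ * ‖v‖ = (β * ‖u‖ - ‖v‖) ^ 2 / β := by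
      field_simp; ring
    rw [this]; positivity
  nlinarith [h2, h5]

lemma jensen_avg {E : Type*} [SeminormedAddCommGroup E] [NormedSpace ℝ E]
    {n : ℕ} (hn : 0 < n) (v : Fin n → E) :
    ‖(1 / (n : ℝ)) • ∑ i, v i‖ ^ 2 ≤ (1 / (n : ℝ)) * ∑ i, ‖v i‖ ^ 2 := by
  have hn' : (0 : ℝ) < n := by exact_mod_cast hn
  have h1 : ‖(1 / (n : ℝ)) • ∑ i, v i‖ = (1 / (n : ℝ)) * ‖∑ i, v i‖ := by
    rw [norm_smul]; simp [abs_of_pos (by positivity : (0:ℝ) < 1 / n)]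
  have h2 : ‖∑ i, v i‖ ≤ ∑ i, ‖v i‖ := norm_sum_le _ _
  have h3 : (∑ i, ‖v i‖) ^ 2 ≤ (n : ℝ) * ∑ i, ‖v i‖ ^ 2 := by
    have := sq_sum_le_card_mul_sum_sq (s := (univ : Finset (Fin n))) (f := fun i => ‖v i‖)
    simpa using this
  have h4 : ‖∑ i, v i‖ ^ 2 ≤ (∑ i, ‖v i‖) ^ 2 := pow_le_pow_left₀ (norm_nonneg _) h2 2
  rw [h1, mul_pow]
  calc (1 / (n:ℝ))^2 * ‖∑ i, v i‖^2 ≤ (1/(n:ℝ))^2 * ((n:ℝ) * ∑ i, ‖v i‖^2) := by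
        apply mul_le_mul_of_nonneg_left (le_trans h4 h3); positivity
    _ = (1 / (n : ℝ)) * ∑ i, ‖v i‖ ^ 2 := by field_simp

lemma grad_avg {d n : ℕ} (fi : Fin n → EuclideanSpace ℝ (Fin d) → ℝ)
    (hdiff : ∀ i, Differentiable ℝ (fi i)) (x : EuclideanSpace ℝ (Fin d)) :
    gradient (fun y => (1 / (n : ℝ)) * ∑ i, fi i y) x
      = (1 / (n : ℝ)) • ∑ i, gradient (fi i) x := by
  have hsum : DifferentiableAt ℝ (fun y => ∑ i, fi i y) x :=
    DifferentiableAt.fun_sum fun i _ => (hdiff i).differentiableAt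
  have h1 : fderiv ℝ (fun y => (1 / (n : ℝ)) * ∑ i, fi i y) x
      = (1 / (n : ℝ)) • fderiv ℝ (fun y => ∑ i, fi i y) x :=
    fderiv_const_mul hsum _
  have h2 : fderiv ℝ (fun y => ∑ i, fi i y) x = ∑ i, fderiv ℝ (fi i) x :=
    fderiv_fun_sum fun i _ => (hdiff i).differentiableAt
  unfold gradient
  rw [h1, h2, map_smul, map_sum]

set_option maxHeartbeats 1000000 in
theorem stmt_14 (d n : ℕ) (hn : 0 < n) (α σ δ : ℝ) (hα0 : 0 < α) (hα1 : α ≤ 1)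
    (Q : EuclideanSpace ℝ (Fin d) → EuclideanSpace ℝ (Fin d))
    (hQ : ∀ x, ‖Q x - x‖ ^ 2 ≤ (1 - α) * ‖x‖ ^ 2)
    (fi : Fin n → EuclideanSpace ℝ (Fin d) → ℝ)
    (hdiff : ∀ i, Differentiable ℝ (fi i))
    (f : EuclideanSpace ℝ (Fin d) → ℝ)
    (hf : f = fun y => (1 / (n : ℝ)) * ∑ i, fi i y)
    (x : EuclideanSpace ℝ (Fin d))
    (g : Fin n → EuclideanSpace ℝ (Fin d))
    (hg : ∀ i, ‖g i - gradient (fi i) x‖ ^ 2 ≤ σ ^ 2)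
    (hsim : ∀ i, ‖gradient (fi i) x - gradient f x‖ ^ 2 ≤ δ ^ 2)
    (η : EuclideanSpace ℝ (Fin d))
    (hη : η = (1 / (n : ℝ)) • ∑ i, Q (g i) - gradient f x) :
    ‖η‖ ^ 2 ≤ (1 - α / 8) * ‖gradient f x‖ ^ 2
      + (1 - α / 4) * (1 + 8 / α) * δ ^ 2
      + ((1 - α / 2) * (1 + 4 / α) + (1 + 2 / α)) * σ ^ 2 := by
  have hn' : (0 : ℝ) < n := by exact_mod_cast hn
  have hgradf : gradient f x = (1 / (n : ℝ)) • ∑ i, gradient (fi i) x := by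
    rw [hf]; exact grad_avg fi hdiff x
  set G := gradient f x with hG
  set A : EuclideanSpace ℝ (Fin d) := (1 / (n : ℝ)) • ∑ i, (Q (g i) - g i) with hA
  set B : EuclideanSpace ℝ (Fin d) := (1 / (n : ℝ)) • ∑ i, (g i - gradient (fi i) x) with hB
  have hdecomp : η = A + B := by
    rw [hη, hA, hB, hgradf, Finset.sum_sub_distrib, Finset.sum_sub_distrib,
      smul_sub, smul_sub]
    abel
  have hσ2 : (0:ℝ) ≤ σ ^ 2 := sq_nonneg σ
  have hδ2 : (0:ℝ) ≤ δ ^ 2 := sq_nonneg δ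
  have havg : (1 / (n : ℝ)) * ∑ _i : Fin n, σ ^ 2 = σ ^ 2 := by
    rw [Finset.sum_const, Finset.card_univ, Fintype.card_fin, nsmul_eq_mul]
    field_simp
  have hBsq : ‖B‖ ^ 2 ≤ σ ^ 2 := by
    calc ‖B‖ ^ 2 ≤ (1 / (n : ℝ)) * ∑ i, ‖g i - gradient (fi i) x‖ ^ 2 := jensen_avg hn _
      _ ≤ (1 / (n : ℝ)) * ∑ _i : Fin n, σ ^ 2 := by
          apply mul_le_mul_of_nonneg_left (Finset.sum_le_sum fun i _ => hg i); positivity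
      _ = σ ^ 2 := havg
  have hfi : ∀ i, ‖gradient (fi i) x‖ ^ 2 ≤ (1 + α/8) * ‖G‖^2 + (1 + 8/α) * δ^2 := by
    intro i
    have h := young_ineq G (gradient (fi i) x - G) (α/8) (by positivity)
    rw [add_sub_cancel] at h
    have hb : (1:ℝ) + 1/(α/8) = 1 + 8/α := by field_simp
    rw [hb] at h
    have h2 : (1 + 8/α) * ‖gradient (fi i) x - G‖^2 ≤ (1 + 8/α) * δ^2 :=
      mul_le_mul_of_nonneg_left (hsim i) (by positivity)
    linarith
  have hgi : ∀ i, ‖g i‖ ^ 2 ≤ (1 + α/4) * ((1 + α/8) * ‖G‖^2 + (1 + 8/α) * δ^2)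
      + (1 + 4/α) * σ^2 := by
    intro i
    have h := young_ineq (gradient (fi i) x) (g i - gradient (fi i) x) (α/4) (by positivity)
    rw [add_sub_cancel] at h
    have hb : (1:ℝ) + 1/(α/4) = 1 + 4/α := by field_simp
    rw [hb] at h
    have h2 : (1 + α/4) * ‖gradient (fi i) x‖^2
        ≤ (1 + α/4) * ((1 + α/8) * ‖G‖^2 + (1 + 8/α) * δ^2) :=
      mul_le_mul_of_nonneg_left (hfi i) (by positivity)
    have h3 : (1 + 4/α) * ‖g i - gradient (fi i) x‖^2 ≤ (1 + 4/α) * σ^2 :=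
      mul_le_mul_of_nonneg_left (hg i) (by positivity)
    linarith
  set P : ℝ := (1 + α/4) * ((1 + α/8) * ‖G‖^2 + (1 + 8/α) * δ^2) + (1 + 4/α) * σ^2 with hPdef
  have hP : 0 ≤ P := by positivity
  have h1α : (0:ℝ) ≤ 1 - α := by linarith
  have hAsq : ‖A‖ ^ 2 ≤ (1 - α) * P := by
    have havgP : (1 / (n : ℝ)) * ∑ _i : Fin n, (1 - α) * P = (1 - α) * P := by
      rw [Finset.sum_const, Finset.card_univ, Fintype.card_fin, nsmul_eq_mul]
      field_simp
    calc ‖A‖ ^ 2 ≤ (1 / (n : ℝ)) * ∑ i, ‖Q (g i) - g i‖ ^ 2 := jensen_avg hn _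
      _ ≤ (1 / (n : ℝ)) * ∑ i, (1 - α) * ‖g i‖ ^ 2 := by
          apply mul_le_mul_of_nonneg_left (Finset.sum_le_sum fun i _ => hQ (g i)); positivity
      _ ≤ (1 / (n : ℝ)) * ∑ _i : Fin n, (1 - α) * P := by
          apply mul_le_mul_of_nonneg_left _ (by positivity)
          exact Finset.sum_le_sum fun i _ => mul_le_mul_of_nonneg_left (hgi i) h1α
      _ = (1 - α) * P := havgP
  have hmain := young_ineq A B (α/2) (by positivity)
  rw [← hdecomp] at hmain
  have h12 : (1:ℝ) + 1/(α/2) = 1 + 2/α := by field_simp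
  rw [h12] at hmain
  have hGsq : (0:ℝ) ≤ ‖G‖^2 := sq_nonneg _
  set Y : ℝ := (1 + α/8) * ‖G‖^2 + (1 + 8/α) * δ^2 with hYdef
  have hY : 0 ≤ Y := by positivity
  have hc1 : (1 + α/2) * (1 - α) ≤ 1 - α/2 := by nlinarith
  have hc2 : (1 - α/2) * (1 + α/4) ≤ 1 - α/4 := by nlinarith
  have hc3 : (1 - α/4) * (1 + α/8) ≤ 1 - α/8 := by nlinarith
  have s2 : (1 + α/2) * ‖A‖^2 ≤ (1 - α/2) * P := by
    calc (1 + α/2) * ‖A‖^2 ≤ (1 + α/2) * ((1 - α) * P) :=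
          mul_le_mul_of_nonneg_left hAsq (by positivity)
      _ = ((1 + α/2) * (1 - α)) * P := by ring
      _ ≤ (1 - α/2) * P := mul_le_mul_of_nonneg_right hc1 hP
  have s3 : (1 - α/2) * P = ((1 - α/2) * (1 + α/4)) * Y + (1 - α/2) * (1 + 4/α) * σ^2 := by
    rw [hPdef, hYdef]; ring
  have s4 : ((1 - α/2) * (1 + α/4)) * Y ≤ (1 - α/4) * Y := mul_le_mul_of_nonneg_right hc2 hY
  have s5 : (1 - α/4) * Y = ((1 - α/4) * (1 + α/8)) * ‖G‖^2 + (1 - α/4) * (1 + 8/α) * δ^2 := by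
    rw [hYdef]; ring
  have s6 : ((1 - α/4) * (1 + α/8)) * ‖G‖^2 ≤ (1 - α/8) * ‖G‖^2 :=
    mul_le_mul_of_nonneg_right hc3 hGsq
  have s7 : (1 + 2/α) * ‖B‖^2 ≤ (1 + 2/α) * σ^2 :=
    mul_le_mul_of_nonneg_left hBsq (by positivity)
  linarith [hmain, s2, s4, s6, s7]
end
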